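/- arXiv:1503.06437 — 4 statements merged into one kernel-verified Lean document; each statement's English description precedes it below -/
import Mathlib

section
/- (Lemma 1, secrecy-constraint reformulation.) Let n ≥ 1, let w, h_s, h_e ∈ ℂⁿ, let σ_s, σ_e > 0 and R ≥ 0, and assume that w^H h_s is a nonnegative real number. Define b = ((2^{R/2}/σ_e)·w^H h_e, (2^R − 1)^{1/2}) ∈ ℂ² and the 3×3 Hermitian matrix S = [[(w^H h_s/σ_s)·I₂, b], [b^H, w^H h_s/σ_s]]. Then the secrecy-rate constraint log₂(1 + |h_s^H w|²/σ_s²) − log₂(1 + |h_e^H w|²/σ_e²) ≥ R holds if and only if S is positive semidefinite. -/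
open scoped ComplexOrder

open Matrix


noncomputable def auxM (a : ℝ) (b : Fin 2 → ℂ) : Matrix (Fin 2 ⊕ Unit) (Fin 2 ⊕ Unit) ℂ :=
  Matrix.fromBlocks ((a:ℂ) • 1) (Matrix.of fun i (_:Unit) => b i)
    (Matrix.of fun (_:Unit) j => (starRingEnd ℂ) (b j))
    (Matrix.of fun (_:Unit) (_:Unit) => (a:ℂ))

lemma aux_form (a : ℝ) (b x : Fin 2 → ℂ) (t : ℂ) :
    dotProduct (star (Sum.elim x (fun _ : Unit => t)))
      ((auxM a b).mulVec (Sum.elim x (fun _ => t))) =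
    (a:ℂ) * (starRingEnd ℂ (x 0) * x 0 + starRingEnd ℂ (x 1) * x 1 + starRingEnd ℂ t * t)
      + t * starRingEnd ℂ (starRingEnd ℂ (b 0) * x 0 + starRingEnd ℂ (b 1) * x 1)
      + starRingEnd ℂ t * (starRingEnd ℂ (b 0) * x 0 + starRingEnd ℂ (b 1) * x 1) := by
  simp [auxM, dotProduct, Matrix.mulVec, Fintype.sum_sum_type, Fin.sum_univ_two,
    Matrix.fromBlocks, Matrix.one_apply]
  ring

lemma amgm (a B0 B1 X0 X1 T : ℝ) (ha : 0 ≤ a) (hB0 : 0 ≤ B0) (hB1 : 0 ≤ B1)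
    (hX0 : 0 ≤ X0) (hX1 : 0 ≤ X1) (hT : 0 ≤ T) (hb : B0^2 + B1^2 ≤ a^2) :
    2*T*(B0*X0+B1*X1) ≤ a*(X0^2+X1^2+T^2) := by
  set S := Real.sqrt (X0^2+X1^2) with hS
  have hS0 : 0 ≤ S := Real.sqrt_nonneg _
  have hS2 : S^2 = X0^2+X1^2 := Real.sq_sqrt (by positivity)
  have h1 : (B0*X0+B1*X1)^2 ≤ (a*S)^2 := by nlinarith [sq_nonneg (B0*X1 - B1*X0)]
  have h2 : B0*X0+B1*X1 ≤ a*S := by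
    nlinarith [mul_nonneg ha hS0, mul_nonneg (mul_nonneg hB0 hX0) (mul_nonneg hB1 hX1)]
  nlinarith [sq_nonneg (S - T), mul_nonneg ha (sq_nonneg (S - T))]

lemma cm (w : ℂ) : starRingEnd ℂ w * w = ((‖w‖^2 : ℝ) : ℂ) := by
  rw [mul_comm, Complex.mul_conj, Complex.normSq_eq_norm_sq]

lemma quad_eq (a : ℝ) (b0 b1 x0 x1 t : ℂ) :
    (a:ℂ) * (starRingEnd ℂ x0 * x0 + starRingEnd ℂ x1 * x1 + starRingEnd ℂ t * t)
      + t * starRingEnd ℂ (starRingEnd ℂ b0 * x0 + starRingEnd ℂ b1 * x1)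
      + starRingEnd ℂ t * (starRingEnd ℂ b0 * x0 + starRingEnd ℂ b1 * x1)
      = ((a * (‖x0‖^2 + ‖x1‖^2 + ‖t‖^2)
          + 2 * (starRingEnd ℂ t * (starRingEnd ℂ b0 * x0 + starRingEnd ℂ b1 * x1)).re : ℝ) : ℂ) := by
  have e1 := Complex.add_conj (starRingEnd ℂ t * (starRingEnd ℂ b0 * x0 + starRingEnd ℂ b1 * x1))
  rw [_root_.map_mul, Complex.conj_conj] at e1
  rw [cm, cm, cm]
  push_cast
  push_cast at e1
  linear_combination e1

lemma aux_psd (a : ℝ) (ha : 0 ≤ a) (b : Fin 2 → ℂ) :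
    (auxM a b).PosSemidef ↔ ‖b 0‖^2 + ‖b 1‖^2 ≤ a^2 := by
  constructor
  · intro h
    set N := Real.sqrt (‖b 0‖^2 + ‖b 1‖^2) with hN
    have hN0 : 0 ≤ N := Real.sqrt_nonneg _
    have hN2 : N^2 = ‖b 0‖^2 + ‖b 1‖^2 := Real.sq_sqrt (by positivity)
    have hform := h.dotProduct_mulVec_nonneg (Sum.elim b (fun _ : Unit => (-(N:ℝ) : ℂ)))
    rw [aux_form] at hform
    have hz : starRingEnd ℂ (b 0) * b 0 + starRingEnd ℂ (b 1) * b 1 = ((N^2 : ℝ) : ℂ) := by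
      rw [RCLike.conj_mul, RCLike.conj_mul, hN2]; push_cast; rfl
    rw [hz] at hform
    have heq : (a:ℂ) * (((N^2:ℝ):ℂ) + starRingEnd ℂ (-(N:ℝ):ℂ) * (-(N:ℝ):ℂ))
        + (-(N:ℝ):ℂ) * starRingEnd ℂ ((N^2:ℝ):ℂ) + starRingEnd ℂ (-(N:ℝ):ℂ) * ((N^2:ℝ):ℂ)
        = ((2*N^2*(a-N) : ℝ) : ℂ) := by
      simp only [map_neg, Complex.conj_ofReal]
      push_cast
      ring
    rw [heq] at hform
    have hre : (0:ℝ) ≤ 2*N^2*(a-N) := Complex.zero_le_real.mp hform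
    rw [← hN2]
    nlinarith [sq_nonneg N, mul_nonneg hN0 hN0]
  · intro hb
    have herm : (auxM a b).IsHermitian := by
      rw [Matrix.IsHermitian]
      ext i j
      rcases i with i | u <;> rcases j with j | v <;>
        simp [auxM, Matrix.conjTranspose_apply, Matrix.fromBlocks, Matrix.one_apply,
          Complex.conj_ofReal, apply_ite]
      · rcases eq_or_ne i j with rfl | hij <;> simp [Matrix.one_apply, *, Complex.conj_ofReal]
        exact fun h => absurd h.symm hij
    refine Matrix.PosSemidef.of_dotProduct_mulVec_nonneg herm fun x => ?_
    have hx : x = Sum.elim (fun i => x (Sum.inl i)) (fun _ : Unit => x (Sum.inr ())) := by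
      funext s; rcases s with i | u
      · rfl
      · cases u; rfl
    rw [hx, aux_form, quad_eq, Complex.zero_le_real]
    set x0 := x (Sum.inl 0)
    set x1 := x (Sum.inl 1)
    set t := x (Sum.inr ())
    set z := starRingEnd ℂ (b 0) * x0 + starRingEnd ℂ (b 1) * x1 with hzdef
    have h1 : |(starRingEnd ℂ t * z).re| ≤ ‖t‖ * ‖z‖ := by
      calc |(starRingEnd ℂ t * z).re| ≤ ‖starRingEnd ℂ t * z‖ := Complex.abs_re_le_norm _
        _ = ‖t‖ * ‖z‖ := by rw [norm_mul, RCLike.norm_conj]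
    have h2 : ‖z‖ ≤ ‖b 0‖ * ‖x0‖ + ‖b 1‖ * ‖x1‖ := by
      calc ‖z‖ ≤ ‖starRingEnd ℂ (b 0) * x0‖ + ‖starRingEnd ℂ (b 1) * x1‖ := norm_add_le _ _
        _ = ‖b 0‖ * ‖x0‖ + ‖b 1‖ * ‖x1‖ := by
            rw [norm_mul, norm_mul, RCLike.norm_conj, RCLike.norm_conj]
    have h3 := amgm a (‖b 0‖) (‖b 1‖) (‖x0‖) (‖x1‖) (‖t‖) ha (norm_nonneg _) (norm_nonneg _)
      (norm_nonneg _) (norm_nonneg _) (norm_nonneg _) hb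
    have ht0 : (0:ℝ) ≤ ‖t‖ := norm_nonneg _
    nlinarith [abs_nonneg ((starRingEnd ℂ t * z).re), neg_abs_le ((starRingEnd ℂ t * z).re),
      mul_nonneg ht0 (norm_nonneg z)]

/-- The 3×3 Hermitian matrix `S = [[(w^H h_s/σ_s)·I₂, b], [bᴴ, w^H h_s/σ_s]]` with
`b = ((2^{R/2}/σ_e)·w^H h_e, (2^R − 1)^{1/2})`. -/
noncomputable def Smat2 (n : ℕ) (w hs he : EuclideanSpace ℂ (Fin n)) (σs σe R : ℝ) :
    Matrix (Fin 2 ⊕ Unit) (Fin 2 ⊕ Unit) ℂ :=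
  let b : Fin 2 → ℂ :=
    ![((((2 : ℝ) ^ (R / 2) / σe : ℝ)) : ℂ) * (inner ℂ w he : ℂ),
      ((Real.sqrt ((2 : ℝ) ^ R - 1) : ℝ) : ℂ)]
  Matrix.fromBlocks (((inner ℂ w hs : ℂ) / (σs : ℂ)) • 1)
    (Matrix.of fun i (_ : Unit) => b i)
    (Matrix.of fun (_ : Unit) j => (starRingEnd ℂ) (b j))
    (Matrix.of fun (_ : Unit) (_ : Unit) => (inner ℂ w hs : ℂ) / (σs : ℂ))

/-- Lemma 1: assuming `w^H h_s` is a nonnegative real, the secrecy-rate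
constraint holds iff `S` is positive semidefinite. -/

theorem stmt2 (n : ℕ) (hn : 1 ≤ n) (w hs he : EuclideanSpace ℂ (Fin n))
    (σs σe R : ℝ) (hσs : 0 < σs) (hσe : 0 < σe) (hR : 0 ≤ R)
    (hreal : ∃ r : ℝ, 0 ≤ r ∧ (inner ℂ w hs : ℂ) = (r : ℂ)) :
    Real.logb 2 (1 + ‖(inner ℂ hs w : ℂ)‖ ^ 2 / σs ^ 2)
        - Real.logb 2 (1 + ‖(inner ℂ he w : ℂ)‖ ^ 2 / σe ^ 2) ≥ R ↔
      (Smat2 n w hs he σs σe R).PosSemidef := by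
  obtain ⟨r, hr0, hinner⟩ := hreal
  have hA1 : (1:ℝ) ≤ (2:ℝ) ^ R := by
    simpa using Real.rpow_le_rpow_of_exponent_le one_le_two hR
  have hM : Smat2 n w hs he σs σe R = auxM (r/σs)
      ![((((2 : ℝ) ^ (R / 2) / σe : ℝ)) : ℂ) * (inner ℂ w he : ℂ),
        ((Real.sqrt ((2 : ℝ) ^ R - 1) : ℝ) : ℂ)] := by
    unfold Smat2 auxM
    rw [hinner]
    push_cast
    rfl
  rw [hM, aux_psd _ (div_nonneg hr0 hσs.le)]
  have h2R : (((2:ℝ)^(R/2))^2 : ℝ) = (2:ℝ)^R := by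
    rw [sq, ← Real.rpow_add (by norm_num : (0:ℝ) < 2)]
    norm_num
  have hb0 : ‖(![((((2 : ℝ) ^ (R / 2) / σe : ℝ)) : ℂ) * (inner ℂ w he : ℂ),
        ((Real.sqrt ((2 : ℝ) ^ R - 1) : ℝ) : ℂ)] : Fin 2 → ℂ) 0‖^2
      = (2:ℝ)^R/σe^2 * ‖(inner ℂ w he : ℂ)‖^2 := by
    have hpos : (0:ℝ) ≤ (2:ℝ)^(R/2)/σe := by positivity
    simp only [Matrix.cons_val_zero, norm_mul, Complex.norm_real]
    rw [Real.norm_of_nonneg hpos, mul_pow, div_pow, h2R]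
  have hb1 : ‖(![((((2 : ℝ) ^ (R / 2) / σe : ℝ)) : ℂ) * (inner ℂ w he : ℂ),
        ((Real.sqrt ((2 : ℝ) ^ R - 1) : ℝ) : ℂ)] : Fin 2 → ℂ) 1‖^2 = (2:ℝ)^R - 1 := by
    simp only [Matrix.cons_val_one, Matrix.cons_val_zero, Matrix.head_cons, Complex.norm_real]
    rw [Real.norm_of_nonneg (Real.sqrt_nonneg _), Real.sq_sqrt (by linarith)]
  rw [hb0, hb1]
  have hsw : ‖(inner ℂ hs w : ℂ)‖ = r := by
    rw [norm_inner_symm, hinner, Complex.norm_real, Real.norm_of_nonneg hr0]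
  have hew : ‖(inner ℂ he w : ℂ)‖ = ‖(inner ℂ w he : ℂ)‖ := norm_inner_symm he w
  rw [hsw, hew]
  set E := ‖(inner ℂ w he : ℂ)‖^2 with hE
  have hE0 : 0 ≤ E := sq_nonneg _
  have hX0 : (0:ℝ) < 1 + r^2/σs^2 := by positivity
  have hY0 : (0:ℝ) < 1 + E/σe^2 := by positivity
  rw [ge_iff_le, ← Real.logb_div (ne_of_gt hX0) (ne_of_gt hY0),
    Real.le_logb_iff_rpow_le (by norm_num : (1:ℝ) < 2) (div_pos hX0 hY0),
    le_div_iff₀ hY0]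
  have expand : (2:ℝ)^R * (1 + E/σe^2) = (2:ℝ)^R/σe^2*E + (2:ℝ)^R := by
    field_simp
    ring
  rw [expand, div_pow]
  constructor <;> intro h <;> linarith
end

section
/- (Theorem 2, rank-one tightness of the inner secrecy-rate maximization with perfect CSI.) Let n, K, L ≥ 1; let h_s, h_{e,k} (k = 1,…,K), h_l (l = 1,…,L) ∈ ℂⁿ; let σ_s, σ_e > 0, P > 0, p_i > 0 (i = 1,…,n), E_l > 0, and t ∈ (0,1]. Define the feasible set F_t of pairs (Q, W) of n×n PSD complex matrices satisfying: (i) for every k, h_{e,k}^H (Q − (1/t − 1)·W) h_{e,k} ≤ (1/t − 1)·σ_e²; (ii) Tr(Q + W) ≤ P; (iii) for every i, the i-th diagonal entry of Q + W is at most p_i; (iv) for every l, h_l^H (Q + W) h_l ≥ E_l. Define φ(Q, W) = (h_s^H Q h_s)/(h_s^H W h_s + σ_s²). If F_t is nonempty, then there exists (Q*, W*) ∈ F_t with rank(Q*) ≤ 1 and φ(Q*, W*) ≥ φ(Q, W) for every (Q, W) ∈ F_t. -/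
open Matrix
open scoped ComplexOrder

/-- Feasible set `F_t` of the inner secrecy-rate maximization (perfect CSI). -/
def Feas5 (n K L : ℕ) (he : Fin K → (Fin n → ℂ)) (hl : Fin L → (Fin n → ℂ))
    (σe P : ℝ) (p : Fin n → ℝ) (E : Fin L → ℝ) (t : ℝ)
    (Q W : Matrix (Fin n) (Fin n) ℂ) : Prop :=
  Q.PosSemidef ∧ W.PosSemidef ∧
  (∀ k, (star (he k) ⬝ᵥ ((Q - (((1 / t - 1 : ℝ)) : ℂ) • W) *ᵥ he k)).re ≤
      (1 / t - 1) * σe ^ 2) ∧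
  (Q + W).trace.re ≤ P ∧
  (∀ i, ((Q + W) i i).re ≤ p i) ∧
  (∀ l, E l ≤ (star (hl l) ⬝ᵥ ((Q + W) *ᵥ hl l)).re)

/-- Objective `φ(Q,W) = h_s^H Q h_s / (h_s^H W h_s + σ_s²)`. -/
noncomputable def phi5 (n : ℕ) (hs : Fin n → ℂ) (σs : ℝ)
    (Q W : Matrix (Fin n) (Fin n) ℂ) : ℝ :=
  (star hs ⬝ᵥ (Q *ᵥ hs)).re / ((star hs ⬝ᵥ (W *ᵥ hs)).re + σs ^ 2)

namespace Stmt5Aux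

variable {n : ℕ}

lemma star_dot (v x : Fin n → ℂ) : star v ⬝ᵥ x = starRingEnd ℂ (star x ⬝ᵥ v) := by
  simp [dotProduct, map_sum, mul_comm]

lemma cs_dot (a b : Fin n → ℂ) :
    Complex.normSq (star a ⬝ᵥ b) ≤ (star a ⬝ᵥ a).re * (star b ⬝ᵥ b).re := by
  let a' : EuclideanSpace ℂ (Fin n) := WithLp.toLp 2 a
  let b' : EuclideanSpace ℂ (Fin n) := WithLp.toLp 2 b
  have hab : (inner ℂ a' b' : ℂ) = star a ⬝ᵥ b := by
    rw [PiLp.inner_apply]; simp [a', b', dotProduct, mul_comm]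
  have haa : (inner ℂ a' a' : ℂ).re = (star a ⬝ᵥ a).re := by
    rw [show (inner ℂ a' a' : ℂ) = star a ⬝ᵥ a by
      rw [PiLp.inner_apply]; simp [a', dotProduct, mul_comm, Complex.mul_conj']]
  have hbb : (inner ℂ b' b' : ℂ).re = (star b ⬝ᵥ b).re := by
    rw [show (inner ℂ b' b' : ℂ) = star b ⬝ᵥ b by
      rw [PiLp.inner_apply]; simp [b', dotProduct, mul_comm, Complex.mul_conj']]
  have h1 : ‖(inner ℂ a' b' : ℂ)‖ ≤ ‖a'‖ * ‖b'‖ := norm_inner_le_norm a' b'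
  have h2 : (RCLike.re (inner ℂ a' a' : ℂ)) = ‖a'‖ ^ 2 := inner_self_eq_norm_sq a'
  have h3 : (RCLike.re (inner ℂ b' b' : ℂ)) = ‖b'‖ ^ 2 := inner_self_eq_norm_sq b'
  have h4 : Complex.normSq (star a ⬝ᵥ b) = ‖(inner ℂ a' b' : ℂ)‖ ^ 2 := by
    rw [hab]; rw [Complex.sq_norm]
  rw [h4, ← haa, ← hbb]
  have h2' : ((inner ℂ a' a' : ℂ)).re = ‖a'‖ ^ 2 := h2
  have h3' : ((inner ℂ b' b' : ℂ)).re = ‖b'‖ ^ 2 := h3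
  rw [h2', h3']
  nlinarith [norm_nonneg a', norm_nonneg b', norm_nonneg (inner ℂ a' b' : ℂ)]


/-- Cauchy–Schwarz for the semi-inner product of a PSD matrix. -/
lemma psd_cs {A : Matrix (Fin n) (Fin n) ℂ} (hA : A.PosSemidef) (x y : Fin n → ℂ) :
    Complex.normSq (star x ⬝ᵥ (A *ᵥ y)) ≤
      (star x ⬝ᵥ (A *ᵥ x)).re * (star y ⬝ᵥ (A *ᵥ y)).re := by
  obtain ⟨B, rfl⟩ : ∃ B : Matrix (Fin n) (Fin n) ℂ, A = Bᴴ * B := by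
    open scoped MatrixOrder in
    exact CStarAlgebra.nonneg_iff_eq_star_mul_self.mp hA.nonneg
  have key : ∀ u w : Fin n → ℂ,
      star u ⬝ᵥ ((Bᴴ * B) *ᵥ w) = star (B *ᵥ u) ⬝ᵥ (B *ᵥ w) := by
    intro u w
    rw [← Matrix.mulVec_mulVec, Matrix.dotProduct_mulVec, ← Matrix.star_mulVec]
  rw [key x y, key x x, key y y]
  exact cs_dot _ _

/-- PSD quadratic forms are nonnegative reals. -/
lemma psd_quad_re {A : Matrix (Fin n) (Fin n) ℂ} (hA : A.PosSemidef) (x : Fin n → ℂ) :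
    0 ≤ (star x ⬝ᵥ (A *ᵥ x)).re ∧ (star x ⬝ᵥ (A *ᵥ x)).im = 0 := by
  have := hA.dotProduct_mulVec_nonneg x
  rw [Complex.nonneg_iff] at this
  exact ⟨this.1, this.2.symm⟩

lemma psd_quad_eq_re {A : Matrix (Fin n) (Fin n) ℂ} (hA : A.PosSemidef) (x : Fin n → ℂ) :
    star x ⬝ᵥ (A *ᵥ x) = (((star x ⬝ᵥ (A *ᵥ x)).re : ℝ) : ℂ) := by
  have h := (psd_quad_re hA x).2
  exact Complex.ext (by simp) (by simp [h])

lemma quad_sub_smul (A B : Matrix (Fin n) (Fin n) ℂ) (c : ℂ) (x : Fin n → ℂ) :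
    star x ⬝ᵥ ((A - c • B) *ᵥ x) = star x ⬝ᵥ (A *ᵥ x) - c * (star x ⬝ᵥ (B *ᵥ x)) := by
  simp [Matrix.sub_mulVec, Matrix.smul_mulVec, dotProduct_sub, dotProduct_smul,
    smul_eq_mul]

lemma quad_sub (A B : Matrix (Fin n) (Fin n) ℂ) (x : Fin n → ℂ) :
    star x ⬝ᵥ ((A - B) *ᵥ x) = star x ⬝ᵥ (A *ᵥ x) - star x ⬝ᵥ (B *ᵥ x) := by
  simp [Matrix.sub_mulVec, dotProduct_sub]

lemma quad_add (A B : Matrix (Fin n) (Fin n) ℂ) (x : Fin n → ℂ) :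
    star x ⬝ᵥ ((A + B) *ᵥ x) = star x ⬝ᵥ (A *ᵥ x) + star x ⬝ᵥ (B *ᵥ x) := by
  simp [Matrix.add_mulVec, dotProduct_add]

lemma vecMulVec_mulVec' (v w x : Fin n → ℂ) :
    vecMulVec v w *ᵥ x = (w ⬝ᵥ x) • v := by
  ext i
  simp only [Matrix.mulVec, dotProduct, Matrix.vecMulVec_apply, Pi.smul_apply, smul_eq_mul,
    Finset.sum_mul]
  exact Finset.sum_congr rfl fun j _ => by ring

lemma quad_vecMulVec (v x : Fin n → ℂ) :
    star x ⬝ᵥ (vecMulVec v (star v) *ᵥ x) =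
      ((Complex.normSq (star x ⬝ᵥ v) : ℝ) : ℂ) := by
  rw [vecMulVec_mulVec', dotProduct_smul]
  have : star v ⬝ᵥ x = starRingEnd ℂ (star x ⬝ᵥ v) := by
    simp [dotProduct, map_sum, mul_comm]
  rw [this, smul_eq_mul, mul_comm, Complex.mul_conj]


lemma contQuad (h : Fin n → ℂ) :
    Continuous fun A : Matrix (Fin n) (Fin n) ℂ => star h ⬝ᵥ (A *ᵥ h) := by
  have heq : (fun A : Matrix (Fin n) (Fin n) ℂ => star h ⬝ᵥ (A *ᵥ h)) =
      fun A => ∑ i, star (h i) * ∑ j, A i j * h j := rfl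
  rw [heq]
  exact continuous_finset_sum _ fun i _ => continuous_const.mul <|
    continuous_finset_sum _ fun j _ =>
      ((continuous_id.matrix_elem i j).mul continuous_const)

lemma contCT : Continuous fun A : Matrix (Fin n) (Fin n) ℂ => Aᴴ := by
  refine continuous_pi fun i => continuous_pi fun j => ?_
  exact continuous_star.comp ((continuous_apply i).comp (continuous_apply j))

lemma isClosed_psd : IsClosed {A : Matrix (Fin n) (Fin n) ℂ | A.PosSemidef} := by
  have h1 : IsClosed {A : Matrix (Fin n) (Fin n) ℂ | A.IsHermitian} :=
    isClosed_eq contCT continuous_id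
  have h2 : ∀ x : Fin n → ℂ,
      IsClosed {A : Matrix (Fin n) (Fin n) ℂ | 0 ≤ star x ⬝ᵥ (A *ᵥ x)} := by
    intro x
    have he : {A : Matrix (Fin n) (Fin n) ℂ | 0 ≤ star x ⬝ᵥ (A *ᵥ x)} =
        {A | 0 ≤ (star x ⬝ᵥ (A *ᵥ x)).re} ∩ {A | 0 = (star x ⬝ᵥ (A *ᵥ x)).im} := by
      ext A; simp [Complex.nonneg_iff]
    rw [he]
    exact (isClosed_le continuous_const (Complex.continuous_re.comp (contQuad x))).inter
      (isClosed_eq continuous_const (Complex.continuous_im.comp (contQuad x)))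
  have he : {A : Matrix (Fin n) (Fin n) ℂ | A.PosSemidef} =
      {A | A.IsHermitian} ∩ ⋂ x : Fin n → ℂ, {A | 0 ≤ star x ⬝ᵥ (A *ᵥ x)} := by
    ext A; simp [Matrix.posSemidef_iff_dotProduct_mulVec, Set.mem_iInter, Matrix.IsHermitian]
  rw [he]
  exact h1.inter (isClosed_iInter h2)

lemma dot_single (A : Matrix (Fin n) (Fin n) ℂ) (i j : Fin n) :
    star (Pi.single i (1:ℂ)) ⬝ᵥ (A *ᵥ Pi.single j 1) = A i j := by
  have hst : star (Pi.single i (1:ℂ) : Fin n → ℂ) = Pi.single i 1 := by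
    funext k
    simp only [Pi.star_apply]
    rcases eq_or_ne k i with h|h
    · subst h; simp
    · simp [Pi.single_eq_of_ne h]
  rw [hst, Matrix.mulVec_single, single_dotProduct]
  simp

lemma entry_le {A A' : Matrix (Fin n) (Fin n) ℂ} {P : ℝ}
    (hA : A.PosSemidef) (hA' : A'.PosSemidef) (htr : (A + A').trace.re ≤ P)
    (i j : Fin n) : ‖A i j‖ ≤ P := by
  have hdiag : ∀ (B : Matrix (Fin n) (Fin n) ℂ), B.PosSemidef → ∀ k, 0 ≤ (B k k).re := by
    intro B hB k
    have := (psd_quad_re hB (Pi.single k 1)).1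
    rwa [dot_single] at this
  have hle : ∀ k, (A k k).re ≤ P := by
    intro k
    have hsum : (A + A').trace.re = ∑ m, ((A m m).re + (A' m m).re) := by
      simp [Matrix.trace, Matrix.diag, Complex.re_sum, Complex.add_re]
    have h1 : (A k k).re ≤ ∑ m, ((A m m).re + (A' m m).re) := by
      have : (A k k).re + (A' k k).re ≤ ∑ m, ((A m m).re + (A' m m).re) :=
        Finset.single_le_sum (fun m _ => add_nonneg (hdiag A hA m) (hdiag A' hA' m))
          (Finset.mem_univ k)
      have := hdiag A' hA' k
      linarith
    linarith [hsum ▸ htr]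
  have hcs := psd_cs hA (Pi.single i 1) (Pi.single j 1)
  rw [dot_single, dot_single, dot_single] at hcs
  have hns : Complex.normSq (A i j) ≤ P * P := by
    have h1 := hle i; have h2 := hle j
    have h3 := hdiag A hA i; have h4 := hdiag A hA j
    nlinarith
  have heq : Complex.normSq (A i j) = ‖A i j‖ ^ 2 := by
    rw [← Complex.sq_norm]
  have hP0 : 0 ≤ P := le_trans (hdiag A hA i) (hle i)
  nlinarith [norm_nonneg (A i j)]


/-- Rank-one reduction: any feasible point can be replaced by a feasible point with
rank-one `Q` and the same objective value. -/
lemma rankone (K L : ℕ) (hs : Fin n → ℂ) (he : Fin K → (Fin n → ℂ))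
    (hl : Fin L → (Fin n → ℂ)) (σs σe P : ℝ) (p : Fin n → ℝ) (E : Fin L → ℝ) (t : ℝ)
    (ht0 : 0 < t) (ht1 : t ≤ 1)
    (Q W : Matrix (Fin n) (Fin n) ℂ) (hF : Feas5 n K L he hl σe P p E t Q W) :
    ∃ Qs Ws, Feas5 n K L he hl σe P p E t Qs Ws ∧ Qs.rank ≤ 1 ∧
      phi5 n hs σs Qs Ws = phi5 n hs σs Q W := by
  obtain ⟨hQ, hW, hC1, hC2, hC3, hC4⟩ := hF
  set α : ℝ := 1 / t - 1 with hα
  have hα0 : 0 ≤ α := by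
    rw [hα]
    have : 1 ≤ 1 / t := (le_div_iff₀ ht0).mpr (by linarith)
    linarith
  set a : ℂ := star hs ⬝ᵥ (Q *ᵥ hs) with ha
  have haim : a.im = 0 := (psd_quad_re hQ hs).2
  have hare : 0 ≤ a.re := (psd_quad_re hQ hs).1
  rcases eq_or_lt_of_le hare with h0 | hpos
  · -- degenerate case: numerator is zero
    refine ⟨0, W + Q, ⟨Matrix.PosSemidef.zero, hW.add hQ, ?_, ?_, ?_, ?_⟩, ?_, ?_⟩
    · intro k
      have hq := psd_quad_re (hW.add hQ) (he k)
      have := quad_sub_smul 0 (W + Q) ((α : ℝ) : ℂ) (he k)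
      rw [this]
      simp only [Matrix.zero_mulVec, dotProduct_zero, zero_sub, Complex.neg_re,
        Complex.mul_re, Complex.ofReal_re, Complex.ofReal_im]
      have h1 : 0 ≤ α * σe ^ 2 := mul_nonneg hα0 (sq_nonneg _)
      rw [← hα]
      nlinarith [hq.1, hq.2, mul_nonneg hα0 hq.1]
    · have : (0 : Matrix (Fin n) (Fin n) ℂ) + (W + Q) = Q + W := by abel
      rw [this]; exact hC2
    · have : (0 : Matrix (Fin n) (Fin n) ℂ) + (W + Q) = Q + W := by abel
      rw [this]; exact hC3
    · have : (0 : Matrix (Fin n) (Fin n) ℂ) + (W + Q) = Q + W := by abel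
      rw [this]; exact hC4
    · simp [Matrix.rank_zero]
    · unfold phi5
      rw [← ha, ← h0]
      simp [Matrix.zero_mulVec]
  · -- main case
    set r : ℝ := a.re with hr
    set v : Fin n → ℂ := Q *ᵥ hs with hv
    set Qs : Matrix (Fin n) (Fin n) ℂ :=
      ((r⁻¹ : ℝ) : ℂ) • vecMulVec v (star v) with hQs
    -- quadratic form of Qs
    have hquadQs : ∀ x, star x ⬝ᵥ (Qs *ᵥ x) =
        (((r⁻¹ * Complex.normSq (star x ⬝ᵥ v) : ℝ)) : ℂ) := by
      intro x
      rw [hQs, Matrix.smul_mulVec, dotProduct_smul, smul_eq_mul, quad_vecMulVec]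
      push_cast
      ring
    have hQsposd : Qs.PosSemidef := by
      refine Matrix.PosSemidef.of_dotProduct_mulVec_nonneg ?_ ?_
      · rw [hQs]
        ext i j
        simp only [Matrix.conjTranspose_apply, Matrix.smul_apply, Matrix.vecMulVec_apply,
          Pi.star_apply, smul_eq_mul, star_mul', RCLike.star_def, _root_.map_mul, Complex.conj_conj,
          Complex.conj_ofReal]
        ring
      · intro x
        rw [hquadQs x]
        rw [Complex.zero_le_real]
        exact mul_nonneg (inv_nonneg.mpr hare) (Complex.normSq_nonneg _)
    -- Q - Qs is PSD by Cauchy-Schwarz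
    have hsub : (Q - Qs).PosSemidef := by
      refine Matrix.PosSemidef.of_dotProduct_mulVec_nonneg ?_ ?_
      · exact hQ.1.sub hQsposd.1
      · intro x
        rw [quad_sub, hquadQs x, psd_quad_eq_re hQ x]
        have hcs := psd_cs hQ x hs
        rw [← ha, ← hr] at hcs
        have : ((r⁻¹ * Complex.normSq (star x ⬝ᵥ v)) : ℝ) ≤ (star x ⬝ᵥ (Q *ᵥ x)).re := by
          rw [inv_mul_le_iff₀ hpos] -- r⁻¹ * s ≤ q ↔ s ≤ r * q ?
          calc Complex.normSq (star x ⬝ᵥ v) ≤ (star x ⬝ᵥ (Q *ᵥ x)).re * r := hcs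
            _ = r * (star x ⬝ᵥ (Q *ᵥ x)).re := mul_comm _ _
        rw [← Complex.ofReal_sub, Complex.zero_le_real]
        linarith
    -- value of Qs at hs
    have hnum : star hs ⬝ᵥ (Qs *ᵥ hs) = a := by
      rw [hquadQs hs, ← ha]
      have h1 : a = ((r : ℝ) : ℂ) := Complex.ext (by simp [hr]) (by simp [haim])
      have h2 : Complex.normSq a = r ^ 2 := by
        rw [h1]; simp [Complex.normSq_ofReal]; ring
      rw [h2, h1]
      congr 1
      rw [sq, ← mul_assoc, inv_mul_cancel₀ hpos.ne', one_mul]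
    refine ⟨Qs, W + (Q - Qs), ⟨hQsposd, hW.add hsub, ?_, ?_, ?_, ?_⟩, ?_, ?_⟩
    · -- eavesdropper constraints
      intro k
      have hmat : Qs - ((α : ℝ) : ℂ) • (W + (Q - Qs)) =
          (Q - ((α : ℝ) : ℂ) • W) - (1 + ((α : ℝ) : ℂ)) • (Q - Qs) := by
        module
      have hq := psd_quad_re hsub (he k)
      calc (star (he k) ⬝ᵥ ((Qs - ((α:ℝ):ℂ) • (W + (Q - Qs))) *ᵥ he k)).re
          = (star (he k) ⬝ᵥ (((Q - ((α:ℝ):ℂ) • W) - (1 + ((α:ℝ):ℂ)) • (Q - Qs)) *ᵥ he k)).re := by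
            rw [hmat]
        _ = (star (he k) ⬝ᵥ ((Q - ((α:ℝ):ℂ) • W) *ᵥ he k)).re -
              ((1 + ((α:ℝ):ℂ)) * (star (he k) ⬝ᵥ ((Q - Qs) *ᵥ he k))).re := by
            rw [quad_sub_smul]; simp [Complex.sub_re]
        _ ≤ α * σe ^ 2 := by
            have h1 : ((1 + ((α:ℝ):ℂ)) * (star (he k) ⬝ᵥ ((Q - Qs) *ᵥ he k))).re =
                (1 + α) * (star (he k) ⬝ᵥ ((Q - Qs) *ᵥ he k)).re := by
              rw [Complex.mul_re]
              simp [hq.2]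
            rw [h1]
            have h2 := hC1 k
            nlinarith [hq.1]
    · have hQW : Qs + (W + (Q - Qs)) = Q + W := by abel
      rw [hQW]; exact hC2
    · have hQW : Qs + (W + (Q - Qs)) = Q + W := by abel
      rw [hQW]; exact hC3
    · have hQW : Qs + (W + (Q - Qs)) = Q + W := by abel
      rw [hQW]; exact hC4
    · -- rank ≤ 1
      have : Qs = Matrix.replicateCol Unit (((r⁻¹:ℝ):ℂ) • v) * Matrix.replicateRow Unit (star v) := by
        rw [hQs, ← Matrix.vecMulVec_eq]
        ext i j
        simp [Matrix.vecMulVec_apply, Matrix.smul_apply, smul_eq_mul]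
        ring
      rw [this]
      calc (Matrix.replicateCol Unit (((r⁻¹:ℝ):ℂ) • v) * Matrix.replicateRow Unit (star v)).rank
          ≤ (Matrix.replicateCol Unit (((r⁻¹:ℝ):ℂ) • v)).rank := Matrix.rank_mul_le_left _ _
        _ ≤ Fintype.card Unit := Matrix.rank_le_card_width _
        _ = 1 := by simp
    · -- equal objective
      unfold phi5
      have hden : star hs ⬝ᵥ ((W + (Q - Qs)) *ᵥ hs) = star hs ⬝ᵥ (W *ᵥ hs) := by
        rw [quad_add, quad_sub, hnum, ← ha]
        ring
      rw [hnum, hden, ← ha]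


end Stmt5Aux

open Stmt5Aux in
set_option maxHeartbeats 2000000 in
/-- Theorem 2: if `F_t ≠ ∅`, there is a maximizer of `φ` on `F_t`
whose `Q`-component has rank at most one. -/
theorem stmt5 (n K L : ℕ) (hn : 1 ≤ n) (hK : 1 ≤ K) (hL : 1 ≤ L)
    (hs : Fin n → ℂ) (he : Fin K → (Fin n → ℂ)) (hl : Fin L → (Fin n → ℂ))
    (σs σe P : ℝ) (p : Fin n → ℝ) (E : Fin L → ℝ) (t : ℝ)
    (hσs : 0 < σs) (hσe : 0 < σe) (hP : 0 < P) (hp : ∀ i, 0 < p i)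
    (hE : ∀ l, 0 < E l) (ht0 : 0 < t) (ht1 : t ≤ 1)
    (hne : ∃ Q W, Feas5 n K L he hl σe P p E t Q W) :
    ∃ Qs Ws, Feas5 n K L he hl σe P p E t Qs Ws ∧ Qs.rank ≤ 1 ∧
      ∀ Q W, Feas5 n K L he hl σe P p E t Q W →
        phi5 n hs σs Q W ≤ phi5 n hs σs Qs Ws := by
  classical
  obtain ⟨Q0, W0, hQW0⟩ := hne
  set S : Set (Matrix (Fin n) (Fin n) ℂ × Matrix (Fin n) (Fin n) ℂ) :=
    {x | Feas5 n K L he hl σe P p E t x.1 x.2} with hS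
  -- S is closed
  have hSclosed : IsClosed S := by
    have h3 : ∀ k : Fin K, IsClosed {x : Matrix (Fin n) (Fin n) ℂ × Matrix (Fin n) (Fin n) ℂ |
        (star (he k) ⬝ᵥ ((x.1 - (((1 / t - 1 : ℝ)) : ℂ) • x.2) *ᵥ he k)).re ≤
          (1 / t - 1) * σe ^ 2} := by
      intro k
      apply isClosed_le _ continuous_const
      exact Complex.continuous_re.comp ((contQuad (he k)).comp
        (continuous_fst.sub (by fun_prop)))
    have h4 : IsClosed {x : Matrix (Fin n) (Fin n) ℂ × Matrix (Fin n) (Fin n) ℂ | ((x.1 + x.2).trace).re ≤ P} := by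
      apply isClosed_le _ continuous_const
      have ht : Continuous fun A : Matrix (Fin n) (Fin n) ℂ => A.trace := by
        have : (fun A : Matrix (Fin n) (Fin n) ℂ => A.trace) = fun A => ∑ i, A i i := rfl
        rw [this]
        exact continuous_finset_sum _ fun i _ =>
          (continuous_apply i).comp (continuous_apply i)
      exact Complex.continuous_re.comp (ht.comp (continuous_fst.add continuous_snd))
    have h5 : ∀ i : Fin n, IsClosed {x : Matrix (Fin n) (Fin n) ℂ × Matrix (Fin n) (Fin n) ℂ | ((x.1 + x.2) i i).re ≤ p i} := by
      intro i
      apply isClosed_le _ continuous_const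
      exact Complex.continuous_re.comp (((continuous_apply i).comp
        ((continuous_apply i).comp (continuous_fst.add continuous_snd))))
    have h6 : ∀ l : Fin L, IsClosed {x : Matrix (Fin n) (Fin n) ℂ × Matrix (Fin n) (Fin n) ℂ |
        E l ≤ (star (hl l) ⬝ᵥ ((x.1 + x.2) *ᵥ hl l)).re} := by
      intro l
      apply isClosed_le continuous_const
      exact Complex.continuous_re.comp ((contQuad (hl l)).comp
        (continuous_fst.add continuous_snd))
    have hSeq : S = (Prod.fst ⁻¹' {A : Matrix (Fin n) (Fin n) ℂ | A.PosSemidef}) ∩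
        (Prod.snd ⁻¹' {A : Matrix (Fin n) (Fin n) ℂ | A.PosSemidef}) ∩
        (⋂ k, {x : Matrix (Fin n) (Fin n) ℂ × Matrix (Fin n) (Fin n) ℂ |
          (star (he k) ⬝ᵥ ((x.1 - (((1 / t - 1 : ℝ)) : ℂ) • x.2) *ᵥ he k)).re ≤
            (1 / t - 1) * σe ^ 2}) ∩
        {x : Matrix (Fin n) (Fin n) ℂ × Matrix (Fin n) (Fin n) ℂ | ((x.1 + x.2).trace).re ≤ P} ∩
        (⋂ i, {x : Matrix (Fin n) (Fin n) ℂ × Matrix (Fin n) (Fin n) ℂ | ((x.1 + x.2) i i).re ≤ p i}) ∩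
        (⋂ l, {x : Matrix (Fin n) (Fin n) ℂ × Matrix (Fin n) (Fin n) ℂ | E l ≤ (star (hl l) ⬝ᵥ ((x.1 + x.2) *ᵥ hl l)).re}) := by
      ext x
      simp only [hS, Set.mem_setOf_eq, Set.mem_inter_iff, Set.mem_preimage,
        Set.mem_iInter, Feas5]
      tauto
    rw [hSeq]
    exact (((((isClosed_psd.preimage continuous_fst).inter
      (isClosed_psd.preimage continuous_snd)).inter
      (isClosed_iInter h3)).inter h4).inter
      (isClosed_iInter h5)).inter (isClosed_iInter h6)
  -- S is contained in a compact box
  have hBc : IsCompact {A : Matrix (Fin n) (Fin n) ℂ | ∀ i j, A i j ∈ Metric.closedBall (0:ℂ) P} := by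
    have heq : {A : Matrix (Fin n) (Fin n) ℂ | ∀ i j, A i j ∈ Metric.closedBall (0:ℂ) P} =
        Set.univ.pi fun _ : Fin n =>
          Set.univ.pi fun _ : Fin n => Metric.closedBall (0:ℂ) P := by
      ext A
      constructor
      · intro h i _ j _
        exact h i j
      · intro h i j
        exact h i (Set.mem_univ i) j (Set.mem_univ j)
    rw [heq]
    exact isCompact_univ_pi fun i => isCompact_univ_pi fun j =>
      isCompact_closedBall _ _
  have hsubset : S ⊆ {A : Matrix (Fin n) (Fin n) ℂ | ∀ i j, A i j ∈ Metric.closedBall (0:ℂ) P} ×ˢ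
      {A : Matrix (Fin n) (Fin n) ℂ | ∀ i j, A i j ∈ Metric.closedBall (0:ℂ) P} := by
    rintro ⟨Q, W⟩ hx
    obtain ⟨hQ, hW, -, htr, -, -⟩ := hx
    constructor
    · intro i j
      simp only [Metric.mem_closedBall, dist_zero_right]
      exact entry_le hQ hW htr i j
    · intro i j
      simp only [Metric.mem_closedBall, dist_zero_right]
      have htr' : (W + Q).trace.re ≤ P := by
        rwa [add_comm] at htr
      exact entry_le hW hQ htr' i j
  have hScompact : IsCompact S :=
    (hBc.prod hBc).of_isClosed_subset hSclosed hsubset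
  -- the objective is continuous on S
  have hcont : ContinuousOn (fun x : Matrix (Fin n) (Fin n) ℂ × Matrix (Fin n) (Fin n) ℂ => phi5 n hs σs x.1 x.2) S := by
    simp only [phi5]
    apply ContinuousOn.div
    · exact (Complex.continuous_re.comp ((contQuad hs).comp continuous_fst)).continuousOn
    · exact ((Complex.continuous_re.comp
        ((contQuad hs).comp continuous_snd)).add continuous_const).continuousOn
    · intro x hx
      have h0 := (psd_quad_re hx.2.1 hs).1
      positivity
  obtain ⟨x0, hx0S, hmax⟩ := hScompact.exists_isMaxOn ⟨(Q0, W0), hQW0⟩ hcont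
  have hx0F : Feas5 n K L he hl σe P p E t x0.1 x0.2 := hx0S
  obtain ⟨Qs, Ws, hFeas, hrank, hphi⟩ :=
    rankone K L hs he hl σs σe P p E t ht0 ht1 x0.1 x0.2 hx0F
  refine ⟨Qs, Ws, hFeas, hrank, fun Q W hQW => ?_⟩
  have hmem : ((Q, W) : Matrix (Fin n) (Fin n) ℂ × Matrix (Fin n) (Fin n) ℂ) ∈ S := hQW
  have h1 : phi5 n hs σs Q W ≤ phi5 n hs σs x0.1 x0.2 := isMaxOn_iff.mp hmax (Q, W) hmem
  rw [← hphi] at h1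
  exact h1
end

section
/- (Corollary 1, perfect-CSI case: rank-one tightness with multiantenna eavesdroppers and EH receivers.) Let n, K, L ≥ 1; let h_s ∈ ℂⁿ; for k = 1,…,K let H_{e,k} ∈ ℂ^{n×m_k} and for l = 1,…,L let H_l ∈ ℂ^{n×m'_l} be complex matrices; let σ_s, σ_e > 0, P > 0, p_i > 0 (i = 1,…,n), E_l > 0, t ∈ (0,1]. Define the feasible set of pairs (Q, W) of n×n PSD complex matrices satisfying: (i) for every k, the m_k×m_k Hermitian matrix (1/t − 1)·σ_e²·I_{m_k} + H_{e,k}^H((1/t − 1)·W − Q)H_{e,k} is PSD; (ii) Tr(Q + W) ≤ P; (iii) for every i, the i-th diagonal entry of Q + W is at most p_i; (iv) for every l, Tr(H_l^H(Q + W)H_l) ≥ E_l. Define φ(Q, W) = (h_s^H Q h_s)/(h_s^H W h_s + σ_s²). If the feasible set is nonempty, then there exists a feasible pair (Q*, W*) with rank(Q*) ≤ 1 and φ(Q*, W*) ≥ φ(Q, W) for every feasible (Q, W). -/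
open Matrix
open scoped ComplexOrder

/-- Feasible set with multiantenna eavesdroppers and EH receivers (perfect CSI). -/
def Feas7 (n K L : ℕ) (m : Fin K → ℕ) (m' : Fin L → ℕ)
    (He : (k : Fin K) → Matrix (Fin n) (Fin (m k)) ℂ)
    (Hl : (l : Fin L) → Matrix (Fin n) (Fin (m' l)) ℂ)
    (σe P : ℝ) (p : Fin n → ℝ) (E : Fin L → ℝ) (t : ℝ)
    (Q W : Matrix (Fin n) (Fin n) ℂ) : Prop :=
  Q.PosSemidef ∧ W.PosSemidef ∧
  (∀ k, ((((1 / t - 1) * σe ^ 2 : ℝ) : ℂ) • (1 : Matrix (Fin (m k)) (Fin (m k)) ℂ) +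
      (He k)ᴴ * ((((1 / t - 1 : ℝ)) : ℂ) • W - Q) * He k).PosSemidef) ∧
  (Q + W).trace.re ≤ P ∧
  (∀ i, ((Q + W) i i).re ≤ p i) ∧
  (∀ l, E l ≤ ((Hl l)ᴴ * (Q + W) * Hl l).trace.re)

/-- Objective `φ(Q,W) = h_s^H Q h_s / (h_s^H W h_s + σ_s²)`. -/
noncomputable def phi7 (n : ℕ) (hs : Fin n → ℂ) (σs : ℝ)
    (Q W : Matrix (Fin n) (Fin n) ℂ) : ℝ :=
  (star hs ⬝ᵥ (Q *ᵥ hs)).re / ((star hs ⬝ᵥ (W *ᵥ hs)).re + σs ^ 2)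

/-- Cauchy–Schwarz for a PSD matrix quadratic form. -/
lemma psd_cs {d : ℕ} {M : Matrix (Fin d) (Fin d) ℂ} (hM : M.PosSemidef) (x y : Fin d → ℂ) :
    ‖star x ⬝ᵥ M *ᵥ y‖ ^ 2 ≤ (star x ⬝ᵥ M *ᵥ x).re * (star y ⬝ᵥ M *ᵥ y).re := by
  open scoped MatrixOrder in set B := CFC.sqrt M with hBdef
  have hB2 : B * B = M := by open scoped MatrixOrder in exact CFC.sqrt_mul_sqrt_self M hM.nonneg
  have hBH : Bᴴ = B := by open scoped MatrixOrder in exact (CFC.sqrt_nonneg M).posSemidef.1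
  have key : ∀ z w : Fin d → ℂ, star z ⬝ᵥ M *ᵥ w = star (B *ᵥ z) ⬝ᵥ (B *ᵥ w) := by
    intro z w
    rw [star_mulVec, hBH, ← dotProduct_mulVec, mulVec_mulVec, hB2]
  have dot_inner : ∀ u w : Fin d → ℂ,
      star u ⬝ᵥ w = @inner ℂ (EuclideanSpace ℂ (Fin d)) _
        ((WithLp.equiv 2 _).symm u) ((WithLp.equiv 2 _).symm w) := by
    intro u w
    rw [EuclideanSpace.inner_eq_star_dotProduct]
    exact dotProduct_comm _ _
  set u := B *ᵥ x
  set w := B *ᵥ y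
  rw [key x y, key x x, key y y, dot_inner, dot_inner, dot_inner]
  set u' : EuclideanSpace ℂ (Fin d) := (WithLp.equiv 2 _).symm u
  set w' : EuclideanSpace ℂ (Fin d) := (WithLp.equiv 2 _).symm w
  simp only [← RCLike.re_to_complex]
  rw [inner_self_eq_norm_sq, inner_self_eq_norm_sq]
  calc ‖@inner ℂ _ _ u' w'‖ ^ 2 ≤ (‖u'‖ * ‖w'‖) ^ 2 := by
        have := norm_inner_le_norm (𝕜 := ℂ) u' w'
        exact pow_le_pow_left₀ (norm_nonneg _) this 2
    _ = ‖u'‖ ^ 2 * ‖w'‖ ^ 2 := by ring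

lemma qf_real {d : ℕ} {M : Matrix (Fin d) (Fin d) ℂ} (hM : M.PosSemidef) (x : Fin d → ℂ) :
    star x ⬝ᵥ M *ᵥ x = ((star x ⬝ᵥ M *ᵥ x).re : ℂ) := by
  have h := hM.dotProduct_mulVec_nonneg x
  rw [Complex.le_def] at h
  exact Complex.ext (by simp) (by simp [← h.2])

lemma psd_smul_real {d : ℕ} {M : Matrix (Fin d) (Fin d) ℂ} (hM : M.PosSemidef) {r : ℝ}
    (hr : 0 ≤ r) : ((r : ℂ) • M).PosSemidef := by
  refine Matrix.PosSemidef.of_dotProduct_mulVec_nonneg ?_ ?_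
  · have : ((r : ℂ) • M)ᴴ = star (r : ℂ) • Mᴴ := conjTranspose_smul _ _
    rw [Matrix.IsHermitian, this, hM.1.eq]
    simp [Complex.star_def, Complex.conj_ofReal]
  · intro x
    rw [smul_mulVec, dotProduct_smul, smul_eq_mul]
    exact mul_nonneg (Complex.zero_le_real.2 hr) (hM.dotProduct_mulVec_nonneg x)

lemma vecMulVec_qf {d : ℕ} (v x y : Fin d → ℂ) :
    star x ⬝ᵥ (vecMulVec v (star v)) *ᵥ y = (star x ⬝ᵥ v) * (star v ⬝ᵥ y) := by
  simp only [vecMulVec, mulVec, dotProduct, Matrix.of_apply, Finset.mul_sum, Finset.sum_mul]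
  rw [Finset.sum_comm]
  apply Finset.sum_congr rfl; intro j _
  apply Finset.sum_congr rfl; intro i _
  ring

lemma vecMulVec_herm {d : ℕ} (v : Fin d → ℂ) : (vecMulVec v (star v)).IsHermitian := by
  ext i j
  simp [vecMulVec, conjTranspose_apply, mul_comm]

lemma vecMulVec_psd {d : ℕ} (v : Fin d → ℂ) : (vecMulVec v (star v)).PosSemidef := by
  refine Matrix.PosSemidef.of_dotProduct_mulVec_nonneg (vecMulVec_herm v) (fun x => ?_)
  rw [vecMulVec_qf, star_dotProduct]
  exact star_mul_self_nonneg (star v ⬝ᵥ x)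

lemma isClosed_psd (d : ℕ) : IsClosed {M : Matrix (Fin d) (Fin d) ℂ | M.PosSemidef} := by
  have : {M : Matrix (Fin d) (Fin d) ℂ | M.PosSemidef} =
      {M : Matrix (Fin d) (Fin d) ℂ | Mᴴ = M} ∩
        ⋂ x : Fin d → ℂ, {M : Matrix (Fin d) (Fin d) ℂ | 0 ≤ star x ⬝ᵥ M *ᵥ x} := by
    ext M
    simp only [Set.mem_setOf_eq, Set.mem_inter_iff, Set.mem_iInter]
    exact ⟨fun h => ⟨h.1, h.dotProduct_mulVec_nonneg⟩, fun h => .of_dotProduct_mulVec_nonneg h.1 h.2⟩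
  rw [this]
  apply IsClosed.inter
  · exact isClosed_eq (continuous_id.matrix_conjTranspose) continuous_id
  · apply isClosed_iInter
    intro x
    have hc : Continuous fun M : Matrix (Fin d) (Fin d) ℂ => star x ⬝ᵥ M *ᵥ x :=
      (continuous_const.dotProduct (continuous_id.matrix_mulVec continuous_const))
    have hcl : IsClosed {z : ℂ | 0 ≤ z} := by
      have : {z : ℂ | 0 ≤ z} = Complex.re ⁻¹' Set.Ici 0 ∩ Complex.im ⁻¹' {0} := by
        ext z
        simp [Complex.le_def, eq_comm]
      rw [this]
      exact (isClosed_Ici.preimage Complex.continuous_re).inter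
        (isClosed_singleton.preimage Complex.continuous_im)
    exact hcl.preimage hc

lemma single_qf {d : ℕ} (M : Matrix (Fin d) (Fin d) ℂ) (i j : Fin d) :
    star (Pi.single i (1:ℂ)) ⬝ᵥ M *ᵥ (Pi.single j 1) = M i j := by
  classical
  have h1 : star (Pi.single i (1:ℂ)) = (Pi.single i (1:ℂ) : Fin d → ℂ) := by
    ext k
    by_cases h : k = i <;> simp [Pi.single_apply, h]
  rw [h1]
  simp [dotProduct, mulVec, Pi.single_apply, mul_ite, ite_mul, Finset.sum_ite_eq,
    Finset.sum_ite_eq']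

lemma psd_diag_re_nonneg {d : ℕ} {M : Matrix (Fin d) (Fin d) ℂ} (hM : M.PosSemidef) (i : Fin d) :
    0 ≤ (M i i).re := by
  have h := hM.dotProduct_mulVec_nonneg (Pi.single i 1)
  rw [single_qf, Complex.le_def] at h
  simpa using h.1

lemma psd_entry_bound {d : ℕ} {M : Matrix (Fin d) (Fin d) ℂ} (hM : M.PosSemidef) {P : ℝ}
    (hdiag : ∀ i, (M i i).re ≤ P) (i j : Fin d) : ‖M i j‖ ≤ P := by
  have hP : 0 ≤ P := le_trans (psd_diag_re_nonneg hM i) (hdiag i)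
  have h := psd_cs hM (Pi.single i 1) (Pi.single j 1)
  rw [single_qf, single_qf, single_qf] at h
  have h2 : ‖M i j‖ ^ 2 ≤ P ^ 2 := le_trans h
    (by nlinarith [psd_diag_re_nonneg hM i, psd_diag_re_nonneg hM j, hdiag i, hdiag j])
  calc ‖M i j‖ = Real.sqrt (‖M i j‖ ^ 2) := (Real.sqrt_sq (norm_nonneg _)).symm
    _ ≤ Real.sqrt (P ^ 2) := Real.sqrt_le_sqrt h2
    _ = P := Real.sqrt_sq hP

lemma psd_shift {n d : ℕ} (A : Matrix (Fin d) (Fin d) ℂ) (H : Matrix (Fin n) (Fin d) ℂ)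
    {X D : Matrix (Fin n) (Fin n) ℂ} (hbase : (A + Hᴴ * X * H).PosSemidef)
    (hD : D.PosSemidef) : (A + Hᴴ * (X + D) * H).PosSemidef := by
  have hid : A + Hᴴ * (X + D) * H = (A + Hᴴ * X * H) + Hᴴ * D * H := by
    rw [Matrix.mul_add, Matrix.add_mul]
    abel
  rw [hid]
  exact hbase.add (hD.conjTranspose_mul_mul_same H)

lemma feas_isCompact (n K L : ℕ) (m : Fin K → ℕ) (m' : Fin L → ℕ)
    (He : (k : Fin K) → Matrix (Fin n) (Fin (m k)) ℂ)
    (Hl : (l : Fin L) → Matrix (Fin n) (Fin (m' l)) ℂ)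
    (σe P : ℝ) (p : Fin n → ℝ) (E : Fin L → ℝ) (t : ℝ) :
    IsCompact {x : Matrix (Fin n) (Fin n) ℂ × Matrix (Fin n) (Fin n) ℂ |
      Feas7 n K L m m' He Hl σe P p E t x.1 x.2} := by
  classical
  set S : Set (Matrix (Fin n) (Fin n) ℂ × Matrix (Fin n) (Fin n) ℂ) :=
    {x | Feas7 n K L m m' He Hl σe P p E t x.1 x.2} with hSdef
  set B : Set (Matrix (Fin n) (Fin n) ℂ) :=
    Set.univ.pi fun _ : Fin n => Set.univ.pi fun _ : Fin n => Metric.closedBall (0:ℂ) P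
    with hBdef
  have hBcomp : IsCompact B :=
    isCompact_univ_pi fun _ => isCompact_univ_pi fun _ => isCompact_closedBall _ _
  have hclosed : IsClosed S := by
    have h1 : IsClosed {x : Matrix (Fin n) (Fin n) ℂ × Matrix (Fin n) (Fin n) ℂ |
        x.1.PosSemidef} := (isClosed_psd n).preimage continuous_fst
    have h2 : IsClosed {x : Matrix (Fin n) (Fin n) ℂ × Matrix (Fin n) (Fin n) ℂ |
        x.2.PosSemidef} := (isClosed_psd n).preimage continuous_snd
    have h3 : ∀ k : Fin K, IsClosed {x : Matrix (Fin n) (Fin n) ℂ × Matrix (Fin n) (Fin n) ℂ |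
        ((((1 / t - 1) * σe ^ 2 : ℝ) : ℂ) • (1 : Matrix (Fin (m k)) (Fin (m k)) ℂ) +
          (He k)ᴴ * ((((1 / t - 1 : ℝ)) : ℂ) • x.2 - x.1) * He k).PosSemidef} := by
      intro k
      refine (isClosed_psd (m k)).preimage ?_
      exact continuous_const.add ((continuous_const.matrix_mul
        (((continuous_snd.const_smul (((1 / t - 1 : ℝ)) : ℂ))).sub continuous_fst)).matrix_mul continuous_const)
    have h4 : IsClosed {x : Matrix (Fin n) (Fin n) ℂ × Matrix (Fin n) (Fin n) ℂ |
        (x.1 + x.2).trace.re ≤ P} :=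
      isClosed_le (Complex.continuous_re.comp
        ((continuous_fst.add continuous_snd).matrix_trace)) continuous_const
    have h5 : ∀ i : Fin n, IsClosed {x : Matrix (Fin n) (Fin n) ℂ × Matrix (Fin n) (Fin n) ℂ |
        ((x.1 + x.2) i i).re ≤ p i} := fun i =>
      isClosed_le (Complex.continuous_re.comp
        ((continuous_fst.add continuous_snd).matrix_elem i i)) continuous_const
    have h6 : ∀ l : Fin L, IsClosed {x : Matrix (Fin n) (Fin n) ℂ × Matrix (Fin n) (Fin n) ℂ |
        E l ≤ ((Hl l)ᴴ * (x.1 + x.2) * Hl l).trace.re} := fun l =>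
      isClosed_le continuous_const (Complex.continuous_re.comp
        (((continuous_const.matrix_mul (continuous_fst.add continuous_snd)).matrix_mul
          continuous_const).matrix_trace))
    have hSeq : S = {x | x.1.PosSemidef} ∩ {x | x.2.PosSemidef} ∩
        (⋂ k, {x | ((((1 / t - 1) * σe ^ 2 : ℝ) : ℂ) • (1 : Matrix (Fin (m k)) (Fin (m k)) ℂ) +
          (He k)ᴴ * ((((1 / t - 1 : ℝ)) : ℂ) • x.2 - x.1) * He k).PosSemidef}) ∩
        {x | (x.1 + x.2).trace.re ≤ P} ∩
        (⋂ i, {x | ((x.1 + x.2) i i).re ≤ p i}) ∩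
        (⋂ l, {x | E l ≤ ((Hl l)ᴴ * (x.1 + x.2) * Hl l).trace.re}) := by
      ext x
      simp only [hSdef, Feas7, Set.mem_setOf_eq, Set.mem_inter_iff, Set.mem_iInter]
      tauto
    rw [hSeq]
    exact ((((h1.inter h2).inter (isClosed_iInter h3)).inter h4).inter
      (isClosed_iInter h5)).inter (isClosed_iInter h6)
  refine (hBcomp.prod hBcomp).of_isClosed_subset hclosed ?_
  rintro ⟨Q, W⟩ hx
  obtain ⟨hQ, hW, -, htr, -, -⟩ := hx
  have hdiag : ∀ (M N : Matrix (Fin n) (Fin n) ℂ), M.PosSemidef → N.PosSemidef →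
      (M + N).trace.re ≤ P → ∀ i, (M i i).re ≤ P := by
    intro M N hM hN htr' i
    have hsum : (M + N).trace.re = ∑ k, ((M k k).re + (N k k).re) := by
      simp [Matrix.trace, Matrix.diag, Complex.re_sum]
    have hle : (M i i).re ≤ ∑ k, ((M k k).re + (N k k).re) := by
      have h0 : (M i i).re ≤ (M i i).re + (N i i).re :=
        le_add_of_nonneg_right (psd_diag_re_nonneg hN i)
      refine le_trans h0 (Finset.single_le_sum (f := fun k => (M k k).re + (N k k).re)
        (fun k _ => ?_) (Finset.mem_univ i))
      exact add_nonneg (psd_diag_re_nonneg hM k) (psd_diag_re_nonneg hN k)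
    calc (M i i).re ≤ _ := hle
      _ = (M + N).trace.re := hsum.symm
      _ ≤ P := htr'
  have hmemB : ∀ (M : Matrix (Fin n) (Fin n) ℂ), M.PosSemidef → (∀ i, (M i i).re ≤ P) →
      M ∈ B := by
    intro M hM hd
    rw [hBdef]
    intro i _
    intro j _
    rw [Metric.mem_closedBall, dist_zero_right]
    exact psd_entry_bound hM hd i j
  constructor
  · exact hmemB Q hQ (hdiag Q W hQ hW htr)
  · refine hmemB W hW ?_
    intro i
    have := hdiag W Q hW hQ (by rwa [add_comm] at htr) i
    exact this

set_option maxHeartbeats 2000000 in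
/-- Corollary 1, perfect CSI: rank-one tightness with multiantenna
eavesdroppers and EH receivers. -/
theorem stmt7 (n K L : ℕ) (hn : 1 ≤ n) (hK : 1 ≤ K) (hL : 1 ≤ L)
    (m : Fin K → ℕ) (m' : Fin L → ℕ)
    (hs : Fin n → ℂ)
    (He : (k : Fin K) → Matrix (Fin n) (Fin (m k)) ℂ)
    (Hl : (l : Fin L) → Matrix (Fin n) (Fin (m' l)) ℂ)
    (σs σe P : ℝ) (p : Fin n → ℝ) (E : Fin L → ℝ) (t : ℝ)
    (hσs : 0 < σs) (hσe : 0 < σe) (hP : 0 < P) (hp : ∀ i, 0 < p i)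
    (hE : ∀ l, 0 < E l) (ht0 : 0 < t) (ht1 : t ≤ 1)
    (hne : ∃ Q W, Feas7 n K L m m' He Hl σe P p E t Q W) :
    ∃ Qs Ws, Feas7 n K L m m' He Hl σe P p E t Qs Ws ∧ Qs.rank ≤ 1 ∧
      ∀ Q W, Feas7 n K L m m' He Hl σe P p E t Q W →
        phi7 n hs σs Q W ≤ phi7 n hs σs Qs Ws := by
  classical
  obtain ⟨Q0, W0, hQW0⟩ := hne
  set S : Set (Matrix (Fin n) (Fin n) ℂ × Matrix (Fin n) (Fin n) ℂ) :=
    {x | Feas7 n K L m m' He Hl σe P p E t x.1 x.2} with hSdef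
  have hSne : S.Nonempty := ⟨(Q0, W0), hQW0⟩
  have hScomp : IsCompact S := feas_isCompact n K L m m' He Hl σe P p E t
  have hdenpos : ∀ (W₂ : Matrix (Fin n) (Fin n) ℂ), W₂.PosSemidef →
      0 < (star hs ⬝ᵥ (W₂ *ᵥ hs)).re + σs ^ 2 := by
    intro W₂ hW₂
    have h := hW₂.re_dotProduct_nonneg hs
    rw [RCLike.re_to_complex] at h
    nlinarith
  have hcont : ContinuousOn (fun x : Matrix (Fin n) (Fin n) ℂ × Matrix (Fin n) (Fin n) ℂ =>
      phi7 n hs σs x.1 x.2) S := by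
    have h1 : Continuous fun x : Matrix (Fin n) (Fin n) ℂ × Matrix (Fin n) (Fin n) ℂ =>
        (star hs ⬝ᵥ (x.1 *ᵥ hs)).re :=
      Complex.continuous_re.comp
        (continuous_const.dotProduct (continuous_fst.matrix_mulVec continuous_const))
    have h2 : Continuous fun x : Matrix (Fin n) (Fin n) ℂ × Matrix (Fin n) (Fin n) ℂ =>
        (star hs ⬝ᵥ (x.2 *ᵥ hs)).re + σs ^ 2 :=
      (Complex.continuous_re.comp
        (continuous_const.dotProduct (continuous_snd.matrix_mulVec
          continuous_const))).add continuous_const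
    exact h1.continuousOn.div h2.continuousOn (fun x hx => (hdenpos x.2 hx.2.1).ne')
  obtain ⟨⟨Q, W⟩, hQWS, hmax⟩ := hScomp.exists_isMaxOn hSne hcont
  obtain ⟨hQ, hW, hk, htr, hdg, hEl⟩ := hQWS
  have hmax' : ∀ Q₂ W₂, Feas7 n K L m m' He Hl σe P p E t Q₂ W₂ →
      phi7 n hs σs Q₂ W₂ ≤ phi7 n hs σs Q W := by
    intro Q₂ W₂ h
    have hmem : (Q₂, W₂) ∈ S := h
    exact isMaxOn_iff.mp hmax (Q₂, W₂) hmem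
  have ht' : (0:ℝ) ≤ 1 / t := by positivity
  have hc : ((1 / t - 1 : ℝ) : ℂ) + 1 = ((1 / t : ℝ) : ℂ) := by push_cast; ring
  set α : ℝ := (star hs ⬝ᵥ Q *ᵥ hs).re with hαdef
  have hα0 : 0 ≤ α := by
    have h := hQ.re_dotProduct_nonneg hs
    rwa [RCLike.re_to_complex] at h
  have hαc : star hs ⬝ᵥ Q *ᵥ hs = (α : ℂ) := qf_real hQ hs
  rcases eq_or_lt_of_le hα0 with h0 | hpos
  · -- degenerate case: optimum value is 0, take Qs = 0
    refine ⟨0, Q + W, ⟨Matrix.PosSemidef.zero, hQ.add hW, ?_, ?_, ?_, ?_⟩, ?_, ?_⟩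
    · intro k
      have hXid : (((1 / t - 1 : ℝ)) : ℂ) • (Q + W) - 0 =
          (((((1 / t - 1 : ℝ)) : ℂ) • W - Q)) + (((1 / t : ℝ) : ℂ)) • Q := by
        rw [← hc]; module
      rw [hXid]
      exact psd_shift _ (He k) (hk k) (psd_smul_real hQ ht')
    · simpa using htr
    · simpa using hdg
    · simpa using hEl
    · simp [Matrix.rank_zero]
    · intro Q₂ W₂ h₂
      have hle := hmax' Q₂ W₂ h₂
      have hnum2 : 0 ≤ (star hs ⬝ᵥ Q₂ *ᵥ hs).re := by
        have h := h₂.1.re_dotProduct_nonneg hs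
        rwa [RCLike.re_to_complex] at h
      have hzero : phi7 n hs σs (0 : Matrix (Fin n) (Fin n) ℂ) (Q + W) = 0 := by
        simp [phi7]
      have hQWzero : phi7 n hs σs Q W = 0 := by
        simp [phi7, ← hαdef, ← h0]
      rw [hzero, ← hQWzero]
      exact hle
  · -- main case: rank-one reduction at the optimum
    set v : Fin n → ℂ := Q *ᵥ hs with hvdef
    set Qs : Matrix (Fin n) (Fin n) ℂ := ((α⁻¹ : ℝ) : ℂ) • vecMulVec v (star v) with hQsdef
    set Ws : Matrix (Fin n) (Fin n) ℂ := W + (Q - Qs) with hWsdef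
    have hqs : ∀ x y : Fin n → ℂ,
        star x ⬝ᵥ Qs *ᵥ y = ((α⁻¹ : ℝ) : ℂ) * ((star x ⬝ᵥ v) * (star v ⬝ᵥ y)) := by
      intro x y
      rw [hQsdef, smul_mulVec, dotProduct_smul, smul_eq_mul, vecMulVec_qf]
    have hQs : Qs.PosSemidef := psd_smul_real (vecMulVec_psd v) (inv_nonneg.2 hα0)
    have hQsqf : star hs ⬝ᵥ Qs *ᵥ hs = (α : ℂ) := by
      rw [hqs]
      have h1 : star hs ⬝ᵥ v = (α : ℂ) := hαc
      have h2 : star v ⬝ᵥ hs = (α : ℂ) := by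
        rw [star_dotProduct, h1]
        simp [Complex.star_def, Complex.conj_ofReal]
      rw [h1, h2]
      have : (α : ℂ) ≠ 0 := by exact_mod_cast hpos.ne'
      push_cast
      field_simp
    have hD : (Q - Qs).PosSemidef := by
      refine Matrix.PosSemidef.of_dotProduct_mulVec_nonneg ?_ ?_
      · exact hQ.1.sub hQs.1
      · intro x
        have hval : star x ⬝ᵥ (Q - Qs) *ᵥ x =
            (((star x ⬝ᵥ Q *ᵥ x).re - α⁻¹ * Complex.normSq (star x ⬝ᵥ v) : ℝ) : ℂ) := by
          rw [Matrix.sub_mulVec, dotProduct_sub, hqs]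
          have h2 : star v ⬝ᵥ x = star (star x ⬝ᵥ v) := star_dotProduct _ _
          rw [h2]
          rw [qf_real hQ x]
          rw [Complex.star_def, Complex.mul_conj]
          push_cast
          simp [Complex.ofReal_re]
        rw [hval]
        rw [Complex.zero_le_real]
        have hcs := psd_cs hQ x hs
        rw [← hvdef, ← hαdef] at hcs
        have hnsq : Complex.normSq (star x ⬝ᵥ v) = ‖star x ⬝ᵥ v‖ ^ 2 := by
          rw [Complex.normSq_eq_norm_sq]
        have h3 : α⁻¹ * (‖star x ⬝ᵥ v‖ ^ 2) ≤ α⁻¹ * ((star x ⬝ᵥ Q *ᵥ x).re * α) :=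
          mul_le_mul_of_nonneg_left hcs (inv_nonneg.2 hα0)
        have h4 : α⁻¹ * ((star x ⬝ᵥ Q *ᵥ x).re * α) = (star x ⬝ᵥ Q *ᵥ x).re := by
          field_simp
        rw [hnsq]
        linarith
    have hWs : Ws.PosSemidef := hW.add hD
    have hQsum : Qs + Ws = Q + W := by rw [hWsdef]; abel
    refine ⟨Qs, Ws, ⟨hQs, hWs, ?_, ?_, ?_, ?_⟩, ?_, ?_⟩
    · intro k
      have hXid : (((1 / t - 1 : ℝ)) : ℂ) • Ws - Qs =
          (((((1 / t - 1 : ℝ)) : ℂ) • W - Q)) + (((1 / t : ℝ) : ℂ)) • (Q - Qs) := by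
        rw [hWsdef, ← hc]
        module
      rw [hXid]
      exact psd_shift _ (He k) (hk k) (psd_smul_real hD ht')
    · rw [hQsum]; exact htr
    · rw [hQsum]; exact hdg
    · rw [hQsum]; exact hEl
    · have hEq : Qs = vecMulVec (((α⁻¹ : ℝ) : ℂ) • v) (star v) := by
        rw [hQsdef]
        ext i j
        simp [vecMulVec, smul_eq_mul, Pi.smul_apply]
        ring
      rw [hEq, vecMulVec_eq Unit]
      exact le_trans (Matrix.rank_mul_le_left _ _)
        (le_trans (Matrix.rank_le_card_width _) (by simp))
    · intro Q₂ W₂ h₂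
      have hphi : phi7 n hs σs Qs Ws = phi7 n hs σs Q W := by
        have hnum : (star hs ⬝ᵥ Qs *ᵥ hs).re = α := by rw [hQsqf]; simp
        have hden : star hs ⬝ᵥ Ws *ᵥ hs = star hs ⬝ᵥ W *ᵥ hs := by
          rw [hWsdef, Matrix.add_mulVec, dotProduct_add, Matrix.sub_mulVec, dotProduct_sub]
          rw [← hvdef, hαc, hQsqf]
          ring
        rw [phi7, phi7, hnum, hden, ← hvdef, ← hαdef]
      rw [hphi]
      exact hmax' Q₂ W₂ h₂
end

section
/- (Sufficiency of the robust energy-harvesting constraint.) Let w, h̄ ∈ ℂⁿ, let E ≥ 0 and ε ≥ 0 be reals, and suppose that the inner product h̄^H w is real (its imaginary part is zero) and that Re(h̄^H w) ≥ √E + ε·‖w‖. Then for every e ∈ ℂⁿ with ‖e‖ ≤ ε one has |(h̄ + e)^H w|² ≥ E. -/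
/-- sufficiency of the robust energy-harvesting constraint:
if `h̄^H w` is real and `Re(h̄^H w) ≥ √E + ε‖w‖`, then `|(h̄+e)^H w|² ≥ E`
for every `e` with `‖e‖ ≤ ε`. -/
theorem stmt12 (n : ℕ) (w hbar : EuclideanSpace ℂ (Fin n)) (E ε : ℝ)
    (hE : 0 ≤ E) (hε : 0 ≤ ε)
    (him : (inner ℂ hbar w : ℂ).im = 0)
    (hre : Real.sqrt E + ε * ‖w‖ ≤ (inner ℂ hbar w : ℂ).re) :
    ∀ e : EuclideanSpace ℂ (Fin n), ‖e‖ ≤ ε →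
      E ≤ ‖(inner ℂ (hbar + e) w : ℂ)‖ ^ 2 := by
  intro e he
  have hadd : (inner ℂ (hbar + e) w : ℂ) = inner ℂ hbar w + inner ℂ e w := inner_add_left _ _ _
  have hew : ‖(inner ℂ e w : ℂ)‖ ≤ ε * ‖w‖ := by
    calc ‖(inner ℂ e w : ℂ)‖ ≤ ‖e‖ * ‖w‖ := norm_inner_le_norm _ _
      _ ≤ ε * ‖w‖ := by gcongr
  have hnonneg : 0 ≤ (inner ℂ hbar w : ℂ).re := le_trans (by positivity) hre
  have hnorm : ‖(inner ℂ hbar w : ℂ)‖ = (inner ℂ hbar w : ℂ).re := by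
    rw [Complex.norm_def, Complex.normSq_apply, him, mul_zero,
      add_zero, Real.sqrt_mul_self hnonneg]
  have key : Real.sqrt E ≤ ‖(inner ℂ (hbar + e) w : ℂ)‖ := by
    have h1 : ‖(inner ℂ hbar w : ℂ)‖ - ‖(inner ℂ e w : ℂ)‖ ≤ ‖(inner ℂ (hbar + e) w : ℂ)‖ := by
      rw [hadd]
      have := norm_sub_norm_le (inner ℂ hbar w : ℂ) (-(inner ℂ e w))
      simp only [norm_neg, sub_neg_eq_add] at this
      linarith
    have h2 : Real.sqrt E ≤ ‖(inner ℂ hbar w : ℂ)‖ - ‖(inner ℂ e w : ℂ)‖ := by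
      rw [hnorm]; linarith
    linarith
  calc E = Real.sqrt E ^ 2 := (Real.sq_sqrt hE).symm
    _ ≤ ‖(inner ℂ (hbar + e) w : ℂ)‖ ^ 2 := by
        apply pow_le_pow_left₀ (Real.sqrt_nonneg _) key
end
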